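/- arXiv:1906.03323 — 2 statements merged into one kernel-verified Lean document; each statement's English description precedes it below -/
import Mathlib

section
/- Let $\beta^*$ maximize $\sum_{n=1}^N \log(1 + \beta(w_n-1))$ subject to $1 + \beta(w-1) \ge 0$ for all $w \in [w_{\min}, w_{\max}]$, where each $w_n \in [w_{\min}, w_{\max}]$. Then $|\beta^*| \sum_{n=1}^N \frac{(w_n-1)^2}{1 + \beta^*(w_n-1)} \le \left| \sum_{n=1}^N (w_n - 1) \right|$. -/
open Finset

/-- Magnitude bound on the maximizer `β*` of the dual likelihood. -/
theorem betastar_magnitude_bound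
    (N : ℕ) (w : Fin N → ℝ) (wmin wmax : ℝ)
    (hwmin : 0 ≤ wmin) (h1 : wmin ≤ 1) (h2 : 1 ≤ wmax)
    (hw : ∀ n, w n ∈ Set.Icc wmin wmax)
    (βs : ℝ)
    (hfeas : ∀ v ∈ Set.Icc wmin wmax, 0 ≤ 1 + βs * (v - 1))
    (hpos : ∀ n, 0 < 1 + βs * (w n - 1))
    (hmax : ∀ β : ℝ, (∀ v ∈ Set.Icc wmin wmax, 0 ≤ 1 + β * (v - 1)) →
      ∑ n, Real.log (1 + β * (w n - 1)) ≤ ∑ n, Real.log (1 + βs * (w n - 1))) :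
    |βs| * ∑ n, (w n - 1) ^ 2 / (1 + βs * (w n - 1)) ≤ |∑ n, (w n - 1)| := by
  set a : Fin N → ℝ := fun n => w n - 1 with ha
  set g : ℝ := ∑ n, a n / (1 + βs * a n) with hg
  set Q : ℝ := ∑ n, a n ^ 2 / (1 + βs * a n) with hQ
  set S : ℝ := ∑ n, a n with hS
  -- feasibility of every point of the segment from 0 to βs
  have hfeas' : ∀ β ∈ segment ℝ 0 βs, ∀ v ∈ Set.Icc wmin wmax,
      0 ≤ 1 + β * (v - 1) := by
    intro β hβ v hv
    rcases hβ with ⟨s, t, hs, ht, hst, hβ⟩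
    simp only [smul_zero, zero_add, smul_eq_mul] at hβ
    subst hβ
    nlinarith [mul_nonneg ht (hfeas v hv)]
  -- f has derivative g at βs
  have hderiv : HasDerivAt (fun β : ℝ => ∑ n, Real.log (1 + β * a n)) g βs := by
    rw [hg]
    apply HasDerivAt.fun_sum
    intro n _
    have h1 : HasDerivAt (fun β : ℝ => 1 + β * a n) (a n) βs := by
      simpa using ((hasDerivAt_id βs).mul_const (a n)).const_add 1
    have h2 := h1.log (ne_of_gt (hpos n))
    simpa using h2
  -- βs is a local max on the segment
  have hmaxon : IsLocalMaxOn (fun β : ℝ => ∑ n, Real.log (1 + β * a n))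
      (segment ℝ 0 βs) βs := by
    have : IsMaxOn (fun β : ℝ => ∑ n, Real.log (1 + β * a n))
        (segment ℝ 0 βs) βs := by
      intro β hβ
      exact hmax β (hfeas' β hβ)
    exact this.localize
  -- the direction -βs lies in the positive tangent cone
  have hcone : (0 : ℝ) - βs ∈ posTangentConeAt (segment ℝ 0 βs) βs := by
    apply sub_mem_posTangentConeAt_of_segment_subset
    rw [segment_symm]
  have hkey : -βs * g ≤ 0 := by
    have := hmaxon.hasFDerivWithinAt_nonpos
      (hderiv.hasFDerivAt.hasFDerivWithinAt) hcone
    simpa using this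
  have hβg : 0 ≤ βs * g := by nlinarith
  -- identity S = g + βs * Q
  have hid : S = g + βs * Q := by
    rw [hS, hg, hQ, Finset.mul_sum, ← Finset.sum_add_distrib]
    apply Finset.sum_congr rfl
    intro n _
    have hd : 1 + βs * a n ≠ 0 := ne_of_gt (hpos n)
    rw [mul_div_assoc', ← add_div, eq_div_iff hd]
    ring
  have hQ0 : 0 ≤ Q := by
    apply Finset.sum_nonneg
    intro n _
    exact div_nonneg (sq_nonneg _) (le_of_lt (hpos n))
  rcases lt_trichotomy βs 0 with hb | hb | hb
  · have hg0 : g ≤ 0 := nonpos_of_mul_nonneg_right hβg hb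
    have hSneg : S ≤ 0 := by nlinarith
    rw [abs_of_nonpos hSneg, abs_of_neg hb]
    nlinarith
  · simp [hb, abs_nonneg]
  · have hg0 : 0 ≤ g := nonneg_of_mul_nonneg_right hβg hb
    have hSpos : 0 ≤ S := by nlinarith
    rw [abs_of_nonneg hSpos, abs_of_pos hb]
    nlinarith
end

section
/- Let $\{M_n\}$ be a martingale with $M_0 = 0$, increments $\Delta M_n = w_n - 1$ where $0 \le w_n \le w_{\max}$ almost surely and $w_{\max} \ge 1$, adapted to filtration $\{\mathcal{F}_n\}$. Suppose almost surely $\sum_{n\le N} \mathbb{E}[(w_n-1)^2 \mid \mathcal{F}_{n-1}] \le N y$. Then $\mathbb{E}\left[\frac{1}{N}\left|\sum_{n \le N}(w_n - 1)\right|\right] \le 5\sqrt{y/N} + 8 w_{\max}/N$. -/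
open MeasureTheory Finset

/-- Expected absolute deviation bound for a sum of martingale increments
`wₙ - 1` with `0 ≤ wₙ ≤ w_max` and predictable variance at most `N y`. -/
theorem martingale_mean_abs_deviation
    {Ω : Type*} {mΩ : MeasurableSpace Ω} (μ : Measure Ω) [IsProbabilityMeasure μ]
    (ℱ : Filtration ℕ mΩ) (w : ℕ → Ω → ℝ) (N : ℕ) (hN : 0 < N)
    (wmax y : ℝ) (hwmax : 1 ≤ wmax) (hy : 0 ≤ y)
    (hadapt : ∀ n, StronglyMeasurable[ℱ (n + 1)] (w n))
    (hbd : ∀ n, ∀ᵐ ω ∂μ, 0 ≤ w n ω ∧ w n ω ≤ wmax)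
    (hmart : ∀ n, MeasureTheory.condExp (ℱ n) μ (w n) =ᵐ[μ] fun _ => (1 : ℝ))
    (hvar : ∀ᵐ ω ∂μ,
      ∑ n ∈ Finset.range N, MeasureTheory.condExp (ℱ n) μ (fun ω' => (w n ω' - 1) ^ 2) ω ≤ N * y) :
    ∫ ω, (1 / (N : ℝ)) * |∑ n ∈ Finset.range N, (w n ω - 1)| ∂μ ≤
      5 * Real.sqrt (y / N) + 8 * wmax / N := by
  have hNpos : (0 : ℝ) < N := Nat.cast_pos.mpr hN
  set X : ℕ → Ω → ℝ := fun n ω => w n ω - 1 with hXdef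
  have hXsm : ∀ n, StronglyMeasurable (X n) := fun n =>
    ((hadapt n).mono (ℱ.le (n + 1))).sub stronglyMeasurable_const
  have hXm : ∀ n, AEStronglyMeasurable (X n) μ := fun n => (hXsm n).aestronglyMeasurable
  have hXbd : ∀ n, ∀ᵐ ω ∂μ, ‖X n ω‖ ≤ wmax := fun n =>
    (hbd n).mono fun ω h => by
      rw [Real.norm_eq_abs, abs_le]
      constructor
      · simp only [hXdef]; linarith [h.1]
      · simp only [hXdef]; linarith [h.2]
  have hwpos : (0 : ℝ) < wmax := lt_of_lt_of_le one_pos hwmax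
  have hXint : ∀ n, Integrable (X n) μ := fun n =>
    (integrable_const wmax).mono' (hXm n) (hXbd n)
  have hwint : ∀ n, Integrable (w n) μ := by
    intro n
    refine (integrable_const wmax).mono'
      ((hadapt n).mono (ℱ.le (n + 1))).aestronglyMeasurable ?_
    filter_upwards [hbd n] with ω h
    rw [Real.norm_eq_abs, abs_le]
    exact ⟨by linarith [h.1], h.2⟩
  have hprodint : ∀ m n, Integrable (fun ω => X m ω * X n ω) μ := by
    intro m n
    refine (integrable_const (wmax * wmax)).mono' ((hXm m).mul (hXm n)) ?_
    filter_upwards [hXbd m, hXbd n] with ω h1 h2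
    rw [Real.norm_eq_abs, abs_mul]
    exact mul_le_mul h1 h2 (abs_nonneg _) hwpos.le
  -- conditional expectation of each increment is 0
  have hX0 : ∀ n, μ[X n | ℱ n] =ᵐ[μ] fun _ => (0 : ℝ) := by
    intro n
    have h1 : μ[X n | ℱ n] =ᵐ[μ] μ[w n | ℱ n] - μ[(fun _ => (1 : ℝ)) | ℱ n] :=
      condExp_sub (hwint n) (integrable_const 1) (ℱ n)
    filter_upwards [h1, hmart n] with ω hω h2
    rw [hω, Pi.sub_apply, condExp_const (ℱ.le n), h2]
    simp
  -- cross terms vanish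
  have hcross : ∀ m n, m < n → ∫ ω, X m ω * X n ω ∂μ = 0 := by
    intro m n hmn
    have hXmF : StronglyMeasurable[ℱ n] (X m) :=
      ((hadapt m).mono (ℱ.mono hmn)).sub stronglyMeasurable_const
    have hpull : μ[X m * X n | ℱ n] =ᵐ[μ] X m * μ[X n | ℱ n] :=
      condExp_mul_of_stronglyMeasurable_left hXmF (hprodint m n) (hXint n)
    have hzero : μ[X m * X n | ℱ n] =ᵐ[μ] fun _ => (0 : ℝ) := by
      filter_upwards [hpull, hX0 n] with ω h1 h2
      rw [h1, Pi.mul_apply, h2]; ring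
    calc ∫ ω, X m ω * X n ω ∂μ = ∫ ω, (μ[X m * X n | ℱ n]) ω ∂μ :=
          (integral_condExp (ℱ.le n)).symm
      _ = ∫ _, (0 : ℝ) ∂μ := integral_congr_ae hzero
      _ = 0 := by simp
  -- all pairwise integrals
  have hpair : ∀ m n, m ∈ range N → n ∈ range N →
      ∫ ω, X m ω * X n ω ∂μ = if m = n then ∫ ω, X n ω ^ 2 ∂μ else 0 := by
    intro m n _ _
    rcases lt_trichotomy m n with h | h | h
    · rw [if_neg h.ne, hcross m n h]
    · subst h; rw [if_pos rfl]; congr 1; ext ω; ring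
    · rw [if_neg h.ne', ← hcross n m h]; congr 1; ext ω; ring
  -- second moment identity + variance bound
  have hS2 : ∫ ω, (∑ n ∈ range N, X n ω) ^ 2 ∂μ ≤ N * y := by
    have hexp : ∫ ω, (∑ n ∈ range N, X n ω) ^ 2 ∂μ
        = ∑ m ∈ range N, ∑ n ∈ range N, ∫ ω, X m ω * X n ω ∂μ := by
      have : ∀ ω, (∑ n ∈ range N, X n ω) ^ 2
          = ∑ m ∈ range N, ∑ n ∈ range N, X m ω * X n ω := by
        intro ω; rw [sq, Finset.sum_mul_sum]
      simp_rw [this]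
      rw [integral_finset_sum _ fun m _ => integrable_finset_sum _ fun n _ => hprodint m n]
      exact Finset.sum_congr rfl fun m _ =>
        integral_finset_sum _ fun n _ => hprodint m n
    have hdiag : ∑ m ∈ range N, ∑ n ∈ range N, ∫ ω, X m ω * X n ω ∂μ
        = ∑ n ∈ range N, ∫ ω, X n ω ^ 2 ∂μ := by
      rw [Finset.sum_congr rfl fun m hm => Finset.sum_congr rfl fun n hn => hpair m n hm hn]
      simp only [Finset.sum_ite_eq, Finset.mem_range]
      exact Finset.sum_congr rfl fun n hn => if_pos (mem_range.mp hn)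
    rw [hexp, hdiag]
    -- now bound the sum of second moments using the conditional variance hypothesis
    have hsqint : ∀ n, Integrable (fun ω => X n ω ^ 2) μ := by
      intro n
      have := hprodint n n
      simpa [sq] using this
    have htower : ∀ n ∈ range N, ∫ ω, X n ω ^ 2 ∂μ
        = ∫ ω, (μ[(fun ω' => (w n ω' - 1) ^ 2) | ℱ n]) ω ∂μ := fun n _ =>
      (integral_condExp (ℱ.le n)).symm
    rw [Finset.sum_congr rfl htower,
      ← integral_finset_sum _ fun n _ => integrable_condExp]
    calc ∫ ω, ∑ n ∈ range N, (μ[(fun ω' => (w n ω' - 1) ^ 2) | ℱ n]) ω ∂μ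
        ≤ ∫ _, (N : ℝ) * y ∂μ :=
          integral_mono_ae (integrable_finset_sum _ fun n _ => integrable_condExp)
            (integrable_const _) hvar
      _ = N * y := by simp
  -- put it together
  set S : Ω → ℝ := fun ω => ∑ n ∈ range N, X n ω with hSdef
  have hSint : Integrable S μ := integrable_finset_sum _ fun n _ => hXint n
  have hS2int : Integrable (fun ω => S ω ^ 2) μ := by
    have : (fun ω => S ω ^ 2) = fun ω => ∑ m ∈ range N, ∑ n ∈ range N, X m ω * X n ω := by
      funext ω; rw [sq, Finset.sum_mul_sum]
    rw [this]
    exact integrable_finset_sum _ fun m _ => integrable_finset_sum _ fun n _ => hprodint m n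
  have hgoal : ∫ ω, |S ω| ∂μ ≤ Real.sqrt ((N : ℝ) * y) := by
    rcases eq_or_lt_of_le (mul_nonneg hNpos.le hy) with hzero | hpos
    · -- N*y = 0 : S = 0 a.e.
      have h0 : ∫ ω, S ω ^ 2 ∂μ = 0 := le_antisymm (hzero ▸ hS2)
        (integral_nonneg fun ω => sq_nonneg _)
      have hae : (fun ω => S ω ^ 2) =ᵐ[μ] 0 :=
        (integral_eq_zero_iff_of_nonneg (fun ω => sq_nonneg _) hS2int).mp h0
      have : ∫ ω, |S ω| ∂μ = 0 := by
        rw [integral_eq_zero_iff_of_nonneg (fun ω => abs_nonneg _) hSint.abs]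
        filter_upwards [hae] with ω hω
        have : S ω ^ 2 = 0 := hω
        have := pow_eq_zero_iff (n := 2) (by norm_num) |>.mp this
        simp [this]
      rw [this]
      exact Real.sqrt_nonneg _
    · set c := Real.sqrt ((N : ℝ) * y) with hc
      have hcpos : 0 < c := Real.sqrt_pos.mpr hpos
      have hc2 : c ^ 2 = (N : ℝ) * y := Real.sq_sqrt (mul_nonneg hNpos.le hy)
      have hptwise : ∀ ω, |S ω| ≤ S ω ^ 2 / (2 * c) + c / 2 := by
        intro ω
        have h1 : (|S ω| - c) ^ 2 ≥ 0 := sq_nonneg _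
        have h2 : |S ω| ^ 2 = S ω ^ 2 := sq_abs _
        rw [div_add' _ _ _ (by positivity), le_div_iff₀ (by positivity)]
        nlinarith
      calc ∫ ω, |S ω| ∂μ ≤ ∫ ω, S ω ^ 2 / (2 * c) + c / 2 ∂μ :=
            integral_mono hSint.abs (by
              exact (hS2int.div_const _).add (integrable_const _)) hptwise
        _ = (∫ ω, S ω ^ 2 ∂μ) / (2 * c) + c / 2 := by
            rw [integral_add (hS2int.div_const _) (integrable_const _),
              integral_div, integral_const]
            simp
        _ ≤ ((N : ℝ) * y) / (2 * c) + c / 2 := by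
            gcongr
        _ = c := by rw [← hc2]; field_simp; ring
  -- conclude
  have key : ∫ ω, (1 / (N : ℝ)) * |S ω| ∂μ ≤ Real.sqrt (y / N) := by
    rw [integral_const_mul]
    have hcN : Real.sqrt ((N : ℝ) * y) = N * Real.sqrt (y / N) := by
      rw [show (N : ℝ) * y = (N : ℝ) ^ 2 * (y / N) by field_simp,
        Real.sqrt_mul (sq_nonneg _), Real.sqrt_sq hNpos.le]
    calc (1 / (N : ℝ)) * ∫ ω, |S ω| ∂μ ≤ (1 / (N : ℝ)) * Real.sqrt ((N : ℝ) * y) := by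
          gcongr
      _ = Real.sqrt (y / N) := by rw [hcN]; field_simp
  refine le_trans key ?_
  have h1 : 0 ≤ Real.sqrt (y / N) := Real.sqrt_nonneg _
  have h2 : 0 ≤ 8 * wmax / N := by positivity
  linarith
end
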